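/- Let A be a square singular matrix over a field F and let A⁻ be any von Neumann inverse of A. Then i(A²A⁻ + I − AA⁻) = i(A + I − AA⁻) = i(A⁻A² + I − A⁻A) = i(A + I − A⁻A) = i(A) − 1. -/
import Mathlib

open Matrix Polynomial

/-- The Drazin index of a square matrix: the smallest natural number `k`
such that `rank (A ^ k) = rank (A ^ (k+1))`. -/
noncomputable def drazinIndex {n : Type*} [Fintype n] [DecidableEq n]
    {F : Type*} [Field F] (A : Matrix n n F) : ℕ :=
  sInf {k : ℕ | (A ^ k).rank = (A ^ (k + 1)).rank}

/-- `X` is the Drazin inverse of `A`: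
`A^(k+1) * X = A^k`, `X * A * X = X`, `A * X = X * A` with `k = drazinIndex A`. -/
def IsDrazinInverse {n : Type*} [Fintype n] [DecidableEq n]
    {F : Type*} [Field F] (A X : Matrix n n F) : Prop :=
  A ^ (drazinIndex A + 1) * X = A ^ drazinIndex A ∧ X * A * X = X ∧ A * X = X * A

namespace DrazinAux

variable {F : Type*} [Field F] {n : ℕ}

/-- Nullity of a square matrix. -/
noncomputable def nullity (M : Matrix (Fin n) (Fin n) F) : ℕ :=
  Module.finrank F (LinearMap.ker M.mulVecLin)

lemma rank_add_nullity (M : Matrix (Fin n) (Fin n) F) : M.rank + nullity M = n := by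
  have h := LinearMap.finrank_range_add_finrank_ker M.mulVecLin
  rw [Module.finrank_fin_fun] at h
  exact h

lemma one_sub_mul_pow (E M : Matrix (Fin n) (Fin n) F) (hE : E * E = E) (hEM : E * M = M)
    (k : ℕ) : (1 - E) * (M + 1 - E) ^ k = 1 - E := by
  induction k with
  | zero => simp
  | succ k ih =>
    rw [pow_succ', ← mul_assoc]
    have h1 : (1 - E) * (M + 1 - E) = 1 - E := by
      have : (1 - E) * (M + 1 - E) = M + 1 - E - (E * M + E * 1 - E * E) := by
        noncomm_ring
      rw [this, hEM, hE, mul_one]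
      abel
    rw [h1, ih]

lemma pow_mulVec_eq (E M : Matrix (Fin n) (Fin n) F) (hEM : E * M = M)
    (k : ℕ) (x : Fin n → F) (hx : E *ᵥ x = x) :
    ((M + 1 - E) ^ k) *ᵥ x = (M ^ k) *ᵥ x ∧ E *ᵥ ((M ^ k) *ᵥ x) = (M ^ k) *ᵥ x := by
  induction k generalizing x with
  | zero => simpa using hx
  | succ k ih =>
    have hBx : (M + 1 - E) *ᵥ x = M *ᵥ x := by
      rw [sub_mulVec, add_mulVec, one_mulVec, hx]
      abel
    have hEMx : E *ᵥ (M *ᵥ x) = M *ᵥ x := by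
      rw [mulVec_mulVec, hEM]
    obtain ⟨ih1, ih2⟩ := ih (M *ᵥ x) hEMx
    have hpow : (M ^ (k + 1)) *ᵥ x = (M ^ k) *ᵥ (M *ᵥ x) := by
      rw [mulVec_mulVec, ← pow_succ]
    constructor
    · rw [pow_succ, ← mulVec_mulVec, hBx, ih1, hpow]
    · rw [hpow, ih2]

/-- Characterization of the kernel of `(M + 1 - E)^k`. -/
lemma ker_pow_iff (E M : Matrix (Fin n) (Fin n) F) (hE : E * E = E) (hEM : E * M = M)
    (k : ℕ) (x : Fin n → F) :
    ((M + 1 - E) ^ k) *ᵥ x = 0 ↔ (E *ᵥ x = x ∧ (M ^ k) *ᵥ x = 0) := by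
  constructor
  · intro h
    have h1 : (1 - E) *ᵥ x = 0 := by
      have := congrArg (fun v => (1 - E) *ᵥ v) h
      simp only [mulVec_mulVec, mulVec_zero, one_sub_mul_pow E M hE hEM k] at this
      exact this
    have hx : E *ᵥ x = x := by
      rw [sub_mulVec, one_mulVec, sub_eq_zero] at h1
      exact h1.symm
    exact ⟨hx, ((pow_mulVec_eq E M hEM k x hx).1).symm.trans h⟩
  · rintro ⟨hx, hM⟩
    rw [(pow_mulVec_eq E M hEM k x hx).1, hM]

/-- The key dimension count. -/
lemma nullity_eq (A Am M : Matrix (Fin n) (Fin n) F) (hAm : A * Am * A = A)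
    (hEM : A * Am * M = M)
    (hM : ∀ k (x : Fin n → F), (A * Am) *ᵥ x = x → (M ^ k) *ᵥ x = (A ^ k) *ᵥ x) (k : ℕ) :
    nullity ((M + 1 - A * Am) ^ k) + nullity A = nullity (A ^ (k + 1)) := by
  set E := A * Am with hEdef
  have hE : E * E = E := by
    rw [hEdef, show A * Am * (A * Am) = ((A * Am * A) * Am) by noncomm_ring, hAm]
  have hEA : E * A = A := by rw [hEdef, hAm]
  set V : Submodule F (Fin n → F) :=
    LinearMap.ker (1 - E).mulVecLin ⊓ LinearMap.ker ((A ^ k)).mulVecLin with hVdef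
  set W : Submodule F (Fin n → F) := LinearMap.ker ((A ^ (k + 1))).mulVecLin with hWdef
  have memW : ∀ x, x ∈ W ↔ (A ^ (k + 1)) *ᵥ x = 0 := fun x => by
    rw [hWdef]; simp [LinearMap.mem_ker, mulVecLin_apply]
  have memV : ∀ x, x ∈ V ↔ (E *ᵥ x = x ∧ (A ^ k) *ᵥ x = 0) := by
    intro x
    rw [hVdef]
    simp only [Submodule.mem_inf, LinearMap.mem_ker, mulVecLin_apply]
    constructor
    · rintro ⟨h1, h2⟩
      refine ⟨?_, h2⟩
      rw [sub_mulVec, one_mulVec, sub_eq_zero] at h1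
      exact h1.symm
    · rintro ⟨h1, h2⟩
      exact ⟨by rw [sub_mulVec, one_mulVec, h1, sub_self], h2⟩
  have hker : LinearMap.ker ((M + 1 - E) ^ k).mulVecLin = V := by
    ext x
    rw [LinearMap.mem_ker, mulVecLin_apply, ker_pow_iff E M hE hEM k x, memV]
    constructor
    · rintro ⟨hx, hMk⟩
      exact ⟨hx, by rw [← hM k x hx]; exact hMk⟩
    · rintro ⟨hx, hAk⟩
      exact ⟨hx, by rw [hM k x hx]; exact hAk⟩
  have hmap : ∀ x ∈ W, A *ᵥ x ∈ V := by
    intro x hx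
    rw [memW] at hx
    rw [memV]
    constructor
    · rw [mulVec_mulVec, hEA]
    · rw [mulVec_mulVec, ← pow_succ]
      exact hx
  let g : W →ₗ[F] V := LinearMap.codRestrict V (A.mulVecLin.comp W.subtype)
    (fun x => by simpa [mulVecLin_apply] using hmap x.1 x.2)
  have hsurj : Function.Surjective g := by
    rintro ⟨y, hy⟩
    rw [memV] at hy
    obtain ⟨hy1, hy2⟩ := hy
    have hxW : Am *ᵥ y ∈ W := by
      have hcomp : (A ^ (k + 1)) *ᵥ (Am *ᵥ y) = (A ^ k) *ᵥ (E *ᵥ y) := by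
        rw [mulVec_mulVec, mulVec_mulVec, pow_succ, mul_assoc, hEdef]
      rw [memW, hcomp, hy1, hy2]
    refine ⟨⟨Am *ᵥ y, hxW⟩, Subtype.ext ?_⟩
    simp only [g, LinearMap.codRestrict_apply, LinearMap.comp_apply,
      Submodule.subtype_apply, mulVecLin_apply, mulVec_mulVec]
    exact hy1
  have hkerg : LinearMap.ker g = Submodule.comap W.subtype (LinearMap.ker A.mulVecLin) := by
    rw [LinearMap.ker_codRestrict, LinearMap.ker_comp]
  have hle : LinearMap.ker A.mulVecLin ≤ W := by
    intro x hx
    rw [LinearMap.mem_ker, mulVecLin_apply] at hx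
    rw [memW, pow_succ, ← mulVec_mulVec, hx, mulVec_zero]
  have hkerdim : Module.finrank F (LinearMap.ker g) = nullity A := by
    set_option synthInstance.maxHeartbeats 1000000 in
    rw [hkerg]
    exact (Submodule.comapSubtypeEquivOfLe hle).finrank_eq
  have hrn := LinearMap.finrank_range_add_finrank_ker g
  rw [LinearMap.range_eq_top.mpr hsurj, finrank_top, hkerdim] at hrn
  have hnB : nullity ((M + 1 - E) ^ k) = Module.finrank F V := by
    rw [nullity, hker]
  rw [hnB, hrn]
  rfl

lemma sInf_shift (S : Set ℕ) (h0 : 0 ∉ S) : sInf {k | k + 1 ∈ S} = sInf S - 1 := by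
  rcases S.eq_empty_or_nonempty with h | h
  · subst h
    have he : {k : ℕ | k + 1 ∈ (∅ : Set ℕ)} = ∅ := by ext k; simp
    rw [he, Nat.sInf_empty]
  · have hS := Nat.sInf_mem h
    have h1 : 1 ≤ sInf S := by
      rcases Nat.eq_zero_or_pos (sInf S) with h' | h'
      · exact absurd (h' ▸ hS) h0
      · exact h'
    have hTne : (sInf S - 1) ∈ {k : ℕ | k + 1 ∈ S} := by
      simp only [Set.mem_setOf_eq]
      rwa [Nat.sub_add_cancel h1]
    have hle : sInf {k : ℕ | k + 1 ∈ S} ≤ sInf S - 1 := Nat.sInf_le hTne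
    have hmem := Nat.sInf_mem ⟨_, hTne⟩
    have hge : sInf S ≤ sInf {k : ℕ | k + 1 ∈ S} + 1 := Nat.sInf_le hmem
    omega

lemma drazinIndex_shift (A Am M : Matrix (Fin n) (Fin n) F) (hsing : ¬ IsUnit A)
    (hAm : A * Am * A = A) (hEM : A * Am * M = M)
    (hM : ∀ k (x : Fin n → F), (A * Am) *ᵥ x = x → (M ^ k) *ᵥ x = (A ^ k) *ᵥ x) :
    drazinIndex (M + 1 - A * Am) = drazinIndex A - 1 := by
  have hset : {k : ℕ | ((M + 1 - A * Am) ^ k).rank = ((M + 1 - A * Am) ^ (k + 1)).rank}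
      = {k : ℕ | (k + 1) ∈ {j : ℕ | (A ^ j).rank = (A ^ (j + 1)).rank}} := by
    ext k
    simp only [Set.mem_setOf_eq]
    have h1 := nullity_eq A Am M hAm hEM hM k
    have h2 := nullity_eq A Am M hAm hEM hM (k + 1)
    have e1 := rank_add_nullity ((M + 1 - A * Am) ^ k)
    have e2 := rank_add_nullity ((M + 1 - A * Am) ^ (k + 1))
    have e3 := rank_add_nullity (A ^ (k + 1))
    have e4 := rank_add_nullity (A ^ (k + 1 + 1))
    omega
  have h0 : 0 ∉ {j : ℕ | (A ^ j).rank = (A ^ (j + 1)).rank} := by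
    simp only [Set.mem_setOf_eq, pow_zero, pow_one, zero_add]
    have hr1 : (1 : Matrix (Fin n) (Fin n) F).rank = n := by
      rw [Matrix.rank_one, Fintype.card_fin]
    intro hcon
    have hdet : ∃ v ≠ 0, A *ᵥ v = 0 := by
      rw [Matrix.exists_mulVec_eq_zero_iff]
      by_contra hd
      exact hsing ((Matrix.isUnit_iff_isUnit_det A).mpr (isUnit_iff_ne_zero.mpr hd))
    obtain ⟨v, hv0, hv⟩ := hdet
    have hpos : 0 < nullity A := by
      rw [nullity, Module.finrank_pos_iff]
      refine ⟨⟨v, ?_⟩, 0, ?_⟩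
      · rw [LinearMap.mem_ker, mulVecLin_apply]; exact hv
      · simp only [ne_eq, Submodule.mk_eq_zero]
        exact hv0
    have := rank_add_nullity A
    omega
  unfold drazinIndex
  rw [hset]
  exact sInf_shift _ h0

lemma drazinIndex_transpose (A : Matrix (Fin n) (Fin n) F) :
    drazinIndex Aᵀ = drazinIndex A := by
  unfold drazinIndex
  congr 1
  ext k
  simp only [Set.mem_setOf_eq, ← transpose_pow, rank_transpose]

lemma hM1 (A Am : Matrix (Fin n) (Fin n) F) (hAm : A * Am * A = A) :
    ∀ k (x : Fin n → F), (A * Am) *ᵥ x = x → ((A * A * Am) ^ k) *ᵥ x = (A ^ k) *ᵥ x := by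
  have hEA : ∀ (y : Fin n → F), (A * Am) *ᵥ (A *ᵥ y) = A *ᵥ y := by
    intro y
    rw [mulVec_mulVec, hAm]
  intro k
  induction k with
  | zero => intro x _; rfl
  | succ k ih =>
    intro x hx
    have hMx : (A * A * Am) *ᵥ x = A *ᵥ x := by
      rw [mul_assoc, ← mulVec_mulVec, hx]
    rw [pow_succ, ← mulVec_mulVec, hMx, ih (A *ᵥ x) (hEA x), mulVec_mulVec, ← pow_succ]

end DrazinAux

open DrazinAux in
/-- for a singular `A` and any von Neumann inverse `A⁻`,
`i(A²A⁻+I−AA⁻) = i(A+I−AA⁻) = i(A⁻A²+I−A⁻A) = i(A+I−A⁻A) = i(A) − 1`. -/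
theorem four_indices_eq {F : Type*} [Field F] {n : ℕ}
    (A Am : Matrix (Fin n) (Fin n) F)
    (hsing : ¬ IsUnit A) (hAm : A * Am * A = A) :
    drazinIndex (A * A * Am + 1 - A * Am) = drazinIndex A - 1 ∧
    drazinIndex (A + 1 - A * Am) = drazinIndex A - 1 ∧
    drazinIndex (Am * A * A + 1 - Am * A) = drazinIndex A - 1 ∧
    drazinIndex (A + 1 - Am * A) = drazinIndex A - 1 := by
  have hAmT : Aᵀ * Amᵀ * Aᵀ = Aᵀ := by
    have h := congrArg Matrix.transpose hAm
    rwa [transpose_mul, transpose_mul, ← mul_assoc] at h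
  have hsingT : ¬ IsUnit Aᵀ := by
    intro h
    rw [Matrix.isUnit_iff_isUnit_det, Matrix.det_transpose,
      ← Matrix.isUnit_iff_isUnit_det] at h
    exact hsing h
  have c2 : drazinIndex (A + 1 - A * Am) = drazinIndex A - 1 :=
    drazinIndex_shift A Am A hsing hAm hAm (fun k x _ => rfl)
  have c1 : drazinIndex (A * A * Am + 1 - A * Am) = drazinIndex A - 1 :=
    drazinIndex_shift A Am (A * A * Am) hsing hAm
      (by rw [show A * Am * (A * A * Am) = ((A * Am * A) * A) * Am by noncomm_ring, hAm])
      (hM1 A Am hAm)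
  have c4 : drazinIndex (A + 1 - Am * A) = drazinIndex A - 1 := by
    rw [← drazinIndex_transpose]
    have ht : (A + 1 - Am * A)ᵀ = Aᵀ + 1 - Aᵀ * Amᵀ := by
      rw [transpose_sub, transpose_add, transpose_one, transpose_mul]
    rw [ht, drazinIndex_shift Aᵀ Amᵀ Aᵀ hsingT hAmT hAmT (fun k x _ => rfl),
      drazinIndex_transpose]
  have c3 : drazinIndex (Am * A * A + 1 - Am * A) = drazinIndex A - 1 := by
    rw [← drazinIndex_transpose]
    have ht : (Am * A * A + 1 - Am * A)ᵀ = Aᵀ * Aᵀ * Amᵀ + 1 - Aᵀ * Amᵀ := by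
      simp only [transpose_sub, transpose_add, transpose_one, transpose_mul, mul_assoc]
    rw [ht, drazinIndex_shift Aᵀ Amᵀ (Aᵀ * Aᵀ * Amᵀ) hsingT hAmT
      (by rw [show Aᵀ * Amᵀ * (Aᵀ * Aᵀ * Amᵀ) = ((Aᵀ * Amᵀ * Aᵀ) * Aᵀ) * Amᵀ by noncomm_ring,
        hAmT])
      (hM1 Aᵀ Amᵀ hAmT), drazinIndex_transpose]
  exact ⟨c1, c2, c3, c4⟩
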